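/- Let n ≥ 2 and let Ω be a bounded open subset of ℝⁿ with Lipschitz boundary. Then there exists a constant c ∈ (0,∞) such that for all x' ∈ ∂Ω and all s ∈ (0, 1/e): ∫_{∂Ω \ 𝔹ₙ(x',s)} |x'−y|^{−(n−1)} dσ_y ≤ c·|ln s|. -/

import Mathlib

open Real MeasureTheory
open scoped MeasureTheory RealInnerProductSpace

open Metric Set
open scoped NNReal ENNReal Pointwise

def HasLipschitzBoundary {n : ℕ} (Ω : Set (EuclideanSpace ℝ (Fin n))) : Prop :=
  ∀ p ∈ frontier Ω,
    ∃ (ν : EuclideanSpace ℝ (Fin n)) (γ : EuclideanSpace ℝ (Fin n) → ℝ)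
      (L : NNReal) (V : Set (EuclideanSpace ℝ (Fin n))),
      ‖ν‖ = 1 ∧ LipschitzWith L γ ∧ IsOpen V ∧ p ∈ V ∧
      Ω ∩ V = {x ∈ V | ⟪x - p, ν⟫ < γ (x - p - ⟪x - p, ν⟫ • ν)}

variable {n : ℕ}

lemma euc_ball_bound (m : ℕ) (hm : 1 ≤ m) :
    ∃ C : ℝ≥0∞, C ≠ ∞ ∧ ∀ (x : EuclideanSpace ℝ (Fin m)) (r : ℝ), 0 < r →
      μH[(m : ℝ)] (closedBall x r) ≤ C * ENNReal.ofReal r ^ m := by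
  set E := EuclideanSpace ℝ (Fin m)
  have hC1 : μH[(m : ℝ)] (closedBall (0 : E) 1) ≠ ∞ := by
    set g : (Fin m → ℝ) ≃L[ℝ] E := (EuclideanSpace.equiv (Fin m) ℝ).symm
    have hg : LipschitzWith ‖(g : (Fin m → ℝ) →L[ℝ] E)‖₊ g :=
      (g : (Fin m → ℝ) →L[ℝ] E).lipschitz
    have hg' : LipschitzWith ‖(g.symm : E →L[ℝ] (Fin m → ℝ))‖₊ g.symm :=
      (g.symm : E →L[ℝ] (Fin m → ℝ)).lipschitz
    set K' : ℝ≥0 := ‖(g.symm : E →L[ℝ] (Fin m → ℝ))‖₊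
    have hsub : closedBall (0 : E) 1 ⊆ g '' (closedBall (g.symm 0) K') := by
      intro y hy
      refine ⟨g.symm y, ?_, g.apply_symm_apply y⟩
      have := hg'.dist_le_mul y 0
      simp only [mem_closedBall] at hy ⊢
      calc dist (g.symm y) (g.symm 0) ≤ K' * dist y 0 := hg'.dist_le_mul y 0
        _ ≤ K' * 1 := by gcongr
        _ = K' := mul_one _
    refine ne_of_lt (lt_of_le_of_lt (measure_mono hsub) ?_)
    refine lt_of_le_of_lt (hg.hausdorffMeasure_image_le (by positivity) _) ?_
    have hpi : (μH[(m : ℝ)] : Measure (Fin m → ℝ)) = volume := by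
      have := hausdorffMeasure_pi_real (ι := Fin m)
      simpa using this
    rw [hpi]
    exact ENNReal.mul_lt_top (ENNReal.rpow_lt_top_of_nonneg (by positivity) ENNReal.coe_ne_top) (isCompact_closedBall _ _).measure_lt_top
  refine ⟨μH[(m : ℝ)] (closedBall (0 : E) 1), hC1, fun x r hr => ?_⟩
  have h1 : closedBall x r = x +ᵥ closedBall (0 : E) r := by
    simp [vadd_closedBall]
  have h2 : closedBall (0 : E) r = r • closedBall (0 : E) 1 := by
    rw [_root_.smul_closedBall _ _ zero_le_one]
    simp [abs_of_pos hr, Real.norm_eq_abs]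
  rw [h1, MeasureTheory.hausdorffMeasure_vadd x (Or.inl (by positivity)), h2,
    Measure.hausdorffMeasure_smul₀ (by positivity) (ne_of_gt hr)]
  rw [ENNReal.smul_def, smul_eq_mul, mul_comm]
  gcongr
  have : (‖r‖₊ : ℝ≥0∞) = ENNReal.ofReal r := by
    exact Real.enorm_eq_ofReal hr.le
  rw [← this, NNReal.rpow_natCast, ENNReal.coe_pow]


lemma frontier_graph (Ω : Set (EuclideanSpace ℝ (Fin n)))
    (hΩo : IsOpen Ω) (p ν : EuclideanSpace ℝ (Fin n)) (γ : EuclideanSpace ℝ (Fin n) → ℝ)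
    (L : NNReal) (V : Set (EuclideanSpace ℝ (Fin n)))
    (hγ : LipschitzWith L γ) (hV : IsOpen V)
    (hgraph : Ω ∩ V = {x ∈ V | ⟪x - p, ν⟫ < γ (x - p - ⟪x - p, ν⟫ • ν)}) :
    ∀ y ∈ frontier Ω ∩ V, ⟪y - p, ν⟫ = γ (y - p - ⟪y - p, ν⟫ • ν) := by
  set φ : EuclideanSpace ℝ (Fin n) → ℝ :=
    fun y => ⟪y - p, ν⟫ - γ (y - p - ⟪y - p, ν⟫ • ν) with hφ
  have hcont : Continuous φ := by
    have h1 : Continuous fun y : EuclideanSpace ℝ (Fin n) => ⟪y - p, ν⟫ :=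
      ((continuous_id.sub continuous_const).inner continuous_const)
    exact h1.sub (hγ.continuous.comp
      (((continuous_id.sub continuous_const)).sub (h1.smul continuous_const)))
  intro y hy
  rcases hy with ⟨hyf, hyV⟩
  have hynΩ : y ∉ Ω := fun h => (hΩo.frontier_eq ▸ hyf).2 h
  by_contra hne
  have hne' : φ y ≠ 0 := sub_ne_zero.mpr hne
  rcases hne'.lt_or_gt with hlt | hgt
  · have h2 : ⟪y - p, ν⟫ < γ (y - p - ⟪y - p, ν⟫ • ν) := sub_neg.mp hlt
    exact hynΩ ((hgraph ▸ (⟨hyV, h2⟩ :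
      y ∈ {x ∈ V | ⟪x - p, ν⟫ < γ (x - p - ⟪x - p, ν⟫ • ν)})) : y ∈ Ω ∩ V).1
  · have hU : IsOpen (V ∩ {z | 0 < φ z}) := hV.inter (isOpen_lt continuous_const hcont)
    have hyU : y ∈ V ∩ {z | 0 < φ z} := ⟨hyV, hgt⟩
    have hdisj : (V ∩ {z | 0 < φ z}) ∩ Ω = ∅ := by
      ext z; simp only [mem_inter_iff, mem_empty_iff_false, iff_false]
      rintro ⟨⟨hzV, hzφ⟩, hzΩ⟩
      have : z ∈ Ω ∩ V := ⟨hzΩ, hzV⟩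
      rw [hgraph] at this
      have h3 : γ (z - p - ⟪z - p, ν⟫ • ν) < ⟪z - p, ν⟫ := sub_pos.mp hzφ
      exact absurd this.2 (not_lt.mpr h3.le)
    have hyc : y ∈ closure Ω := hyf.1
    rcases mem_closure_iff.1 hyc _ hU hyU with ⟨z, hz1, hz2⟩
    have : z ∈ (V ∩ {z | 0 < φ z}) ∩ Ω := ⟨hz1, hz2⟩
    rw [hdisj] at this
    exact absurd this (notMem_empty z)

lemma local_graph_bound (hn : 2 ≤ n) (Ω : Set (EuclideanSpace ℝ (Fin n)))
    (hΩo : IsOpen Ω) (p ν : EuclideanSpace ℝ (Fin n)) (γ : EuclideanSpace ℝ (Fin n) → ℝ)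
    (L : NNReal) (V : Set (EuclideanSpace ℝ (Fin n))) (hν : ‖ν‖ = 1)
    (hγ : LipschitzWith L γ) (hV : IsOpen V)
    (hgraph : Ω ∩ V = {x ∈ V | ⟪x - p, ν⟫ < γ (x - p - ⟪x - p, ν⟫ • ν)}) :
    ∃ C : ℝ≥0∞, C ≠ ∞ ∧ ∀ (x : EuclideanSpace ℝ (Fin n)) (r : ℝ), 0 < r →
      μH[(n : ℝ) - 1] (frontier Ω ∩ V ∩ Metric.closedBall x r)
        ≤ C * ENNReal.ofReal r ^ (n - 1) := by
  have hd0 : (0:ℝ) ≤ (n : ℝ) - 1 := by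
    have : (2:ℝ) ≤ n := by exact_mod_cast hn
    linarith
  have hcast : ((n - 1 : ℕ) : ℝ) = (n : ℝ) - 1 := by
    have h1 : 1 ≤ n := by omega
    push_cast [Nat.cast_sub h1]; ring
  have hν0 : ν ≠ 0 := fun h => by simp [h] at hν
  have hνin : ⟪ν, ν⟫ = 1 := by
    rw [real_inner_self_eq_norm_mul_norm, hν]; norm_num
  -- the graph map
  set f : EuclideanSpace ℝ (Fin n) → EuclideanSpace ℝ (Fin n) :=
    fun u => p + (u + γ u • ν) with hf
  have hfl : LipschitzWith (1 + L) f := by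
    apply LipschitzWith.of_dist_le_mul
    intro u v
    have h1 : dist (γ u) (γ v) ≤ L * dist u v := hγ.dist_le_mul u v
    rw [Real.dist_eq, dist_eq_norm] at h1
    have h2 : f u - f v = (u - v) + (γ u - γ v) • ν := by simp only [hf]; module
    rw [dist_eq_norm, dist_eq_norm, h2]
    calc ‖(u - v) + (γ u - γ v) • ν‖ ≤ ‖u - v‖ + ‖(γ u - γ v) • ν‖ := norm_add_le _ _
      _ = ‖u - v‖ + |γ u - γ v| := by rw [norm_smul, Real.norm_eq_abs, hν, mul_one]
      _ ≤ ‖u - v‖ + L * ‖u - v‖ := add_le_add le_rfl h1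
      _ = (1 + L : ℝ≥0) * ‖u - v‖ := by push_cast; ring
  -- the projection
  set Q : EuclideanSpace ℝ (Fin n) → EuclideanSpace ℝ (Fin n) :=
    fun y => y - p - ⟪y - p, ν⟫ • ν with hQ
  have hQl : LipschitzWith 2 Q := by
    apply LipschitzWith.of_dist_le_mul
    intro y z
    have hqq : Q y - Q z = (y - z) - ⟪y - z, ν⟫ • ν := by
      simp only [hQ, inner_sub_left]
      module
    rw [dist_eq_norm, dist_eq_norm, hqq]
    calc ‖(y - z) - ⟪y - z, ν⟫ • ν‖ ≤ ‖y - z‖ + ‖⟪y - z, ν⟫ • ν‖ := norm_sub_le _ _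
      _ = ‖y - z‖ + |⟪y - z, ν⟫| := by rw [norm_smul, Real.norm_eq_abs, hν, mul_one]
      _ ≤ ‖y - z‖ + ‖y - z‖ * ‖ν‖ := add_le_add le_rfl (abs_real_inner_le_norm _ _)
      _ = (2 : ℝ≥0) * ‖y - z‖ := by rw [hν]; push_cast; ring
  have hQν : ∀ y, ⟪Q y, ν⟫ = 0 := by
    intro y
    simp only [hQ]
    rw [inner_sub_left, real_inner_smul_left, hνin]
    ring
  have hfQ : ∀ y ∈ frontier Ω ∩ V, f (Q y) = y := by
    intro y hy
    have hγy := frontier_graph Ω hΩo p ν γ L V hγ hV hgraph y hy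
    simp only [hf, hQ]
    rw [← hγy]
    module
  -- the hyperplane
  have hfact : Fact (Module.finrank ℝ (EuclideanSpace ℝ (Fin n)) = (n - 1) + 1) := by
    constructor
    rw [finrank_euclideanSpace_fin]
    omega
  set e : ((ℝ ∙ ν)ᗮ : Submodule ℝ (EuclideanSpace ℝ (Fin n))) ≃ₗᵢ[ℝ]
      EuclideanSpace ℝ (Fin (n - 1)) :=
    (OrthonormalBasis.fromOrthogonalSpanSingleton (𝕜 := ℝ) (n - 1) hν0).repr with he
  obtain ⟨Cm, hCm, hCball⟩ := euc_ball_bound (n - 1) (by omega)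
  refine ⟨((1 + L : ℝ≥0) : ℝ≥0∞) ^ ((n:ℝ) - 1) * (Cm * ENNReal.ofReal 4 ^ (n - 1)),
    ENNReal.mul_ne_top (ENNReal.rpow_ne_top_of_nonneg hd0 ENNReal.coe_ne_top)
      (ENNReal.mul_ne_top hCm (ENNReal.pow_ne_top ENNReal.ofReal_ne_top)), fun x r hr => ?_⟩
  set S := frontier Ω ∩ V ∩ Metric.closedBall x r with hS
  rcases S.eq_empty_or_nonempty with hSe | ⟨y₀, hy₀⟩
  · rw [hSe]; simp
  have hy₀' : y₀ ∈ frontier Ω ∩ V := hy₀.1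
  -- S is contained in the image under f of a hyperplane ball
  have hQy₀ : Q y₀ ∈ (ℝ ∙ ν)ᗮ := by
    rw [Submodule.mem_orthogonal_singleton_iff_inner_right]
    rw [real_inner_comm]; exact hQν y₀
  set T : Set (EuclideanSpace ℝ (Fin n)) :=
    ((ℝ ∙ ν)ᗮ : Submodule ℝ (EuclideanSpace ℝ (Fin n))) ∩ Metric.closedBall (Q y₀) (4 * r)
    with hT
  have hsub : S ⊆ f '' T := by
    intro y hy
    refine ⟨Q y, ⟨?_, ?_⟩, hfQ y hy.1⟩
    · rw [SetLike.mem_coe, Submodule.mem_orthogonal_singleton_iff_inner_right, real_inner_comm]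
      exact hQν y
    · rw [Metric.mem_closedBall]
      calc dist (Q y) (Q y₀) ≤ 2 * dist y y₀ := hQl.dist_le_mul y y₀
        _ ≤ 2 * (dist y x + dist x y₀) := by have := dist_triangle y x y₀; linarith
        _ ≤ 2 * (r + r) := by
            gcongr
            · exact Metric.mem_closedBall.1 hy.2
            · rw [dist_comm]; exact Metric.mem_closedBall.1 hy₀.2
        _ = 4 * r := by ring
  -- bound the measure of T
  have hTb : μH[(n : ℝ) - 1] T ≤ Cm * ENNReal.ofReal (4 * r) ^ (n - 1) := by
    have hTim : T = (Subtype.val : ((ℝ ∙ ν)ᗮ : Submodule ℝ (EuclideanSpace ℝ (Fin n))) →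
        EuclideanSpace ℝ (Fin n)) ''
        (Metric.closedBall (⟨Q y₀, hQy₀⟩ :
          ((ℝ ∙ ν)ᗮ : Submodule ℝ (EuclideanSpace ℝ (Fin n)))) (4 * r)) := by
      ext u
      constructor
      · rintro ⟨hu1, hu2⟩
        exact ⟨⟨u, hu1⟩, by rwa [Metric.mem_closedBall, Subtype.dist_eq], rfl⟩
      · rintro ⟨⟨u', hu'⟩, hu2, rfl⟩
        exact ⟨hu', by rwa [Metric.mem_closedBall, Subtype.dist_eq] at hu2⟩
    rw [hTim, (isometry_subtype_coe).hausdorffMeasure_image (Or.inl hd0)]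
    have heq := (e.isometry).hausdorffMeasure_image (Or.inl hd0)
      (Metric.closedBall (⟨Q y₀, hQy₀⟩ :
        ((ℝ ∙ ν)ᗮ : Submodule ℝ (EuclideanSpace ℝ (Fin n)))) (4 * r))
    rw [← heq]
    have hsub2 : e '' (Metric.closedBall (⟨Q y₀, hQy₀⟩ :
        ((ℝ ∙ ν)ᗮ : Submodule ℝ (EuclideanSpace ℝ (Fin n)))) (4 * r))
        ⊆ Metric.closedBall (e ⟨Q y₀, hQy₀⟩) (4 * r) := by
      rintro _ ⟨w, hw, rfl⟩
      rw [Metric.mem_closedBall] at hw ⊢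
      rwa [e.isometry.dist_eq]
    calc μH[(n : ℝ) - 1] (e '' _) ≤ μH[(n : ℝ) - 1]
          (Metric.closedBall (e ⟨Q y₀, hQy₀⟩) (4 * r)) := measure_mono hsub2
      _ ≤ Cm * ENNReal.ofReal (4 * r) ^ (n - 1) := by
          rw [← hcast]
          exact hCball _ _ (by linarith)
  -- put everything together
  calc μH[(n : ℝ) - 1] S ≤ μH[(n : ℝ) - 1] (f '' T) := measure_mono hsub
    _ ≤ ((1 + L : ℝ≥0) : ℝ≥0∞) ^ ((n:ℝ) - 1) * μH[(n : ℝ) - 1] T :=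
        hfl.hausdorffMeasure_image_le hd0 T
    _ ≤ ((1 + L : ℝ≥0) : ℝ≥0∞) ^ ((n:ℝ) - 1) *
        (Cm * ENNReal.ofReal (4 * r) ^ (n - 1)) := by gcongr
    _ = ((1 + L : ℝ≥0) : ℝ≥0∞) ^ ((n:ℝ) - 1) * (Cm * ENNReal.ofReal 4 ^ (n - 1)) *
        ENNReal.ofReal r ^ (n - 1) := by
        rw [ENNReal.ofReal_mul (by norm_num), mul_pow]
        ring

lemma global_ball_bound (hn : 2 ≤ n) (Ω : Set (EuclideanSpace ℝ (Fin n)))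
    (hΩo : IsOpen Ω) (hΩb : Bornology.IsBounded Ω)
    (hlip : ∀ p ∈ frontier Ω,
      ∃ (ν : EuclideanSpace ℝ (Fin n)) (γ : EuclideanSpace ℝ (Fin n) → ℝ)
        (L : NNReal) (V : Set (EuclideanSpace ℝ (Fin n))),
        ‖ν‖ = 1 ∧ LipschitzWith L γ ∧ IsOpen V ∧ p ∈ V ∧
        Ω ∩ V = {x ∈ V | ⟪x - p, ν⟫ < γ (x - p - ⟪x - p, ν⟫ • ν)}) :
    ∃ C : ℝ≥0∞, C ≠ ∞ ∧ ∀ x ∈ frontier Ω, ∀ r : ℝ, 0 < r →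
      μH[(n : ℝ) - 1] (frontier Ω ∩ Metric.closedBall x r)
        ≤ C * ENNReal.ofReal r ^ (n - 1) := by
  rcases (frontier Ω).eq_empty_or_nonempty with hfe | hfne
  · exact ⟨1, ENNReal.one_ne_top, fun x hx => by rw [hfe] at hx; exact absurd hx (Set.notMem_empty x)⟩
  have hfcomp : IsCompact (frontier Ω) :=
    Metric.isCompact_of_isClosed_isBounded isClosed_frontier
      (hΩb.closure.subset frontier_subset_closure)
  have key : ∀ p : frontier Ω, ∃ (δ : ℝ) (C : ℝ≥0∞), 0 < δ ∧ C ≠ ∞ ∧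
      ∀ (x : EuclideanSpace ℝ (Fin n)) (r : ℝ), 0 < r →
        Metric.closedBall x r ⊆ Metric.ball (p : EuclideanSpace ℝ (Fin n)) (3 * δ) →
        μH[(n : ℝ) - 1] (frontier Ω ∩ Metric.closedBall x r)
          ≤ C * ENNReal.ofReal r ^ (n - 1) := by
    rintro ⟨p, hp⟩
    obtain ⟨ν, γ, L, V, hν, hγ, hV, hpV, hgraph⟩ := hlip p hp
    obtain ⟨C, hC, hCb⟩ := local_graph_bound hn Ω hΩo p ν γ L V hν hγ hV hgraph
    obtain ⟨ε, hε, hεV⟩ := Metric.isOpen_iff.1 hV p hpV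
    refine ⟨ε / 3, C, by linarith, hC, fun x r hr hsub => ?_⟩
    have h3 : (3:ℝ) * (ε / 3) = ε := by ring
    have h1 : frontier Ω ∩ Metric.closedBall x r
        ⊆ frontier Ω ∩ V ∩ Metric.closedBall x r := by
      rintro z ⟨hz1, hz2⟩
      exact ⟨⟨hz1, hεV (h3 ▸ hsub hz2)⟩, hz2⟩
    exact le_trans (measure_mono h1) (hCb x r hr)
  choose δ C hδ hCne hball using key
  obtain ⟨t, hcov⟩ := hfcomp.elim_finite_subcover
    (fun p : frontier Ω => Metric.ball (p : EuclideanSpace ℝ (Fin n)) (δ p))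
    (fun _ => Metric.isOpen_ball)
    (fun x hx => Set.mem_iUnion.2 ⟨⟨x, hx⟩, Metric.mem_ball_self (hδ _)⟩)
  have htne : t.Nonempty := by
    obtain ⟨x, hx⟩ := hfne
    obtain ⟨p, hpt, _⟩ := Set.mem_iUnion₂.1 (hcov hx)
    exact ⟨p, hpt⟩
  set r₀ : ℝ := t.inf' htne δ with hr₀
  have hr₀pos : 0 < r₀ := by
    rw [hr₀, Finset.lt_inf'_iff]
    exact fun p _ => hδ p
  -- total measure is finite
  have hM : μH[(n : ℝ) - 1] (frontier Ω) ≠ ∞ := by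
    have hsub : frontier Ω ⊆ ⋃ p ∈ t, frontier Ω ∩
        Metric.closedBall (p : EuclideanSpace ℝ (Fin n)) (δ p) := by
      intro x hx
      obtain ⟨p, hpt, hxp⟩ := Set.mem_iUnion₂.1 (hcov hx)
      exact Set.mem_iUnion₂.2 ⟨p, hpt, hx, Metric.ball_subset_closedBall hxp⟩
    refine ne_top_of_le_ne_top ?_ (measure_mono hsub)
    refine ne_of_lt (lt_of_le_of_lt (measure_biUnion_finset_le t _) ?_)
    refine ENNReal.sum_lt_top.2 fun p hpt => ?_
    refine lt_of_le_of_lt (hball p p (δ p) (hδ p)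
      (Metric.closedBall_subset_ball (by linarith [hδ p]))) ?_
    exact ENNReal.mul_lt_top (hCne p).lt_top (ENNReal.pow_lt_top ENNReal.ofReal_lt_top)
  set M := μH[(n : ℝ) - 1] (frontier Ω) with hMdef
  set Cmax : ℝ≥0∞ := t.sup C with hCmaxdef
  have hCmaxne : Cmax ≠ ∞ :=
    ne_of_lt ((Finset.sup_lt_iff (by simp)).2 fun p _ => (hCne p).lt_top)
  have hpow0 : ENNReal.ofReal r₀ ^ (n - 1) ≠ 0 :=
    pow_ne_zero _ (ne_of_gt (ENNReal.ofReal_pos.2 hr₀pos))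
  have hpowtop : ENNReal.ofReal r₀ ^ (n - 1) ≠ ∞ := ENNReal.pow_ne_top ENNReal.ofReal_ne_top
  refine ⟨Cmax + M * (ENNReal.ofReal r₀ ^ (n - 1))⁻¹, ?_, fun x hx r hr => ?_⟩
  · exact ENNReal.add_ne_top.2 ⟨hCmaxne, ENNReal.mul_ne_top hM (ENNReal.inv_ne_top.2 hpow0)⟩
  rcases le_or_gt r r₀ with hrr | hrr
  · obtain ⟨p, hpt, hxp⟩ := Set.mem_iUnion₂.1 (hcov hx)
    have hr₀le : r₀ ≤ δ p := Finset.inf'_le δ hpt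
    have hsubball : Metric.closedBall x r
        ⊆ Metric.ball (p : EuclideanSpace ℝ (Fin n)) (3 * δ p) := by
      intro z hz
      rw [Metric.mem_closedBall] at hz
      rw [Metric.mem_ball] at hxp ⊢
      calc dist z ↑p ≤ dist z x + dist x ↑p := dist_triangle _ _ _
        _ < r + δ p := add_lt_add_of_le_of_lt hz hxp
        _ ≤ 3 * δ p := by linarith
    calc μH[(n : ℝ) - 1] (frontier Ω ∩ Metric.closedBall x r)
        ≤ C p * ENNReal.ofReal r ^ (n - 1) := hball p x r hr hsubball
      _ ≤ (Cmax + M * (ENNReal.ofReal r₀ ^ (n - 1))⁻¹) * ENNReal.ofReal r ^ (n - 1) := by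
          gcongr
          exact le_trans (Finset.le_sup hpt) le_self_add
  · calc μH[(n : ℝ) - 1] (frontier Ω ∩ Metric.closedBall x r)
        ≤ M := measure_mono Set.inter_subset_left
      _ = M * (ENNReal.ofReal r₀ ^ (n - 1))⁻¹ * ENNReal.ofReal r₀ ^ (n - 1) := by
          rw [mul_assoc, ENNReal.inv_mul_cancel hpow0 hpowtop, mul_one]
      _ ≤ (Cmax + M * (ENNReal.ofReal r₀ ^ (n - 1))⁻¹) * ENNReal.ofReal r ^ (n - 1) := by
          gcongr <;> first
            | exact le_add_self
            | exact ENNReal.ofReal_le_ofReal hrr.le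

theorem stmt_10 (n : ℕ) (hn : 2 ≤ n) (Ω : Set (EuclideanSpace ℝ (Fin n)))
    (hΩo : IsOpen Ω) (hΩb : Bornology.IsBounded Ω) (hlip : HasLipschitzBoundary Ω) :
    ∃ c : ℝ, 0 < c ∧ ∀ x' ∈ frontier Ω, ∀ s ∈ Set.Ioo (0 : ℝ) (Real.exp (-1)),
      (∫ y in frontier Ω \ Metric.ball x' s,
          dist x' y ^ (-((n : ℝ) - 1)) ∂(μH[(n : ℝ) - 1])) ≤ c * |Real.log s| := by
  have hlip' := fun p hp => hlip p hp
  obtain ⟨C, hCne, hC⟩ := global_ball_bound hn Ω hΩo hΩb hlip'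
  have hd0 : (0:ℝ) ≤ (n : ℝ) - 1 := by
    have : (2:ℝ) ≤ n := by exact_mod_cast hn
    linarith
  have hcast : ((n - 1 : ℕ) : ℝ) = (n : ℝ) - 1 := by
    have h1 : 1 ≤ n := by omega
    push_cast [Nat.cast_sub h1]; ring
  -- diameter bound
  obtain ⟨D₀, hD₀⟩ := Metric.isBounded_iff.1 (hΩb.closure.subset frontier_subset_closure)
  set D : ℝ := max D₀ 1 with hD
  have hD1 : (1:ℝ) ≤ D := le_max_right _ _
  have hDd : ∀ x ∈ frontier Ω, ∀ y ∈ frontier Ω, dist x y ≤ D :=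
    fun x hx y hy => le_trans (hD₀ hx hy) (le_max_left _ _)
  -- the constant
  set K₀ : ℝ := (Real.log D + 1) / Real.log 2 + 2 with hK₀
  have hlog2 : 0 < Real.log 2 := Real.log_pos (by norm_num)
  have hlogD : 0 ≤ Real.log D := Real.log_nonneg hD1
  have hK₀pos : 0 < K₀ := by positivity
  refine ⟨(C.toReal * 2 ^ (n - 1) + 1) * K₀, by positivity, fun x' hx' s hs => ?_⟩
  obtain ⟨hs0, hs1⟩ := hs
  have hslt1 : s < 1 := lt_trans hs1 (by rw [← Real.exp_zero]; exact Real.exp_lt_exp.2 (by norm_num))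
  have hlogs : Real.log s ≤ -1 := by
    have h := Real.log_lt_log hs0 hs1
    rw [Real.log_exp] at h
    linarith
  have habs : 1 ≤ |Real.log s| := by
    rw [abs_of_nonpos (by linarith)]; linarith
  -- dyadic decomposition
  set N : ℕ := ⌈Real.logb 2 (D / s)⌉₊ with hN
  have hDs1 : 1 ≤ D / s := (one_le_div hs0).2 (by linarith)
  have hlogbnn : 0 ≤ Real.logb 2 (D / s) := Real.logb_nonneg (by norm_num) hDs1
  have hDN : D ≤ 2 ^ N * s := by
    have h1 : Real.logb 2 (D / s) ≤ (N : ℝ) := Nat.le_ceil _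
    have h2 : D / s ≤ 2 ^ (N : ℝ) := by
      calc D / s = 2 ^ Real.logb 2 (D / s) :=
            (Real.rpow_logb (by norm_num) (by norm_num) (by positivity)).symm
        _ ≤ 2 ^ (N : ℝ) := Real.rpow_le_rpow_of_exponent_le (by norm_num) h1
    rw [Real.rpow_natCast] at h2
    calc D = D / s * s := by field_simp
      _ ≤ 2 ^ N * s := by gcongr
  set A : ℕ → Set (EuclideanSpace ℝ (Fin n)) := fun k =>
    frontier Ω ∩ (Metric.closedBall x' (2 ^ (k + 1) * s) \ Metric.ball x' (2 ^ k * s)) with hA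
  have hcover : frontier Ω \ Metric.ball x' s ⊆ ⋃ k : Fin (N + 1), A k := by
    intro y hy
    obtain ⟨hyf, hyb⟩ := hy
    have hdy : s ≤ dist y x' := not_lt.1 (fun h => hyb (Metric.mem_ball.2 h))
    have hdyp : 0 < dist y x' := lt_of_lt_of_le hs0 hdy
    have hdyD : dist y x' ≤ D := hDd y hyf x' hx'
    set q : ℝ := dist y x' / s with hq
    have hq1 : 1 ≤ q := (one_le_div hs0).2 hdy
    have hqpos : 0 < q := by linarith
    set k : ℕ := ⌊Real.logb 2 q⌋₊ with hk
    have hlogq : 0 ≤ Real.logb 2 q := Real.logb_nonneg (by norm_num) hq1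
    have hk1 : (2:ℝ) ^ k ≤ q := by
      have h1 : (k : ℝ) ≤ Real.logb 2 q := Nat.floor_le hlogq
      have h2 : (2:ℝ) ^ (k:ℝ) ≤ 2 ^ Real.logb 2 q :=
        Real.rpow_le_rpow_of_exponent_le (by norm_num) h1
      rwa [Real.rpow_logb (by norm_num) (by norm_num) hqpos, Real.rpow_natCast] at h2
    have hk2 : q < 2 ^ (k + 1) := by
      have h1 : Real.logb 2 q < (k:ℝ) + 1 := Nat.lt_floor_add_one _
      have h2 : (2:ℝ) ^ Real.logb 2 q < 2 ^ ((k:ℝ) + 1) :=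
        Real.rpow_lt_rpow_of_exponent_lt (by norm_num) h1
      rw [Real.rpow_logb (by norm_num) (by norm_num) hqpos] at h2
      calc q < 2 ^ ((k:ℝ) + 1) := h2
        _ = 2 ^ (k + 1) := by
            rw [show ((k:ℝ) + 1) = ((k + 1 : ℕ) : ℝ) by push_cast; ring, Real.rpow_natCast]
    have hkN : k < N + 1 := by
      have h1 : Real.logb 2 q ≤ Real.logb 2 (D / s) := by
        have hle : q ≤ D / s := by rw [hq]; gcongr
        exact Real.logb_le_logb_of_le (by norm_num) hqpos hle
      have h2 : (k:ℝ) ≤ (N:ℝ) := le_trans (Nat.floor_le hlogq) (le_trans h1 (Nat.le_ceil _))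
      exact_mod_cast lt_of_le_of_lt (Nat.cast_le.1 h2 : k ≤ N) (Nat.lt_succ_self N)
    refine Set.mem_iUnion.2 ⟨⟨k, hkN⟩, hyf, ?_, ?_⟩
    · rw [Metric.mem_closedBall]
      have := hk2
      rw [hq, div_lt_iff₀ hs0] at this
      linarith [this]
    · intro hmem
      rw [Metric.mem_ball] at hmem
      have := hk1
      rw [hq, le_div_iff₀ hs0] at this
      linarith
  -- measurability
  have hAm : ∀ k : ℕ, MeasurableSet (A k) := fun k =>
    (isClosed_frontier.measurableSet).inter
      ((Metric.isClosed_closedBall.measurableSet).diff Metric.isOpen_ball.measurableSet)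
  have hgeq : (fun y : EuclideanSpace ℝ (Fin n) => dist x' y ^ (-((n : ℝ) - 1)))
      = fun y => ((dist x' y) ^ (n - 1 : ℕ))⁻¹ := by
    funext y
    rw [← Real.rpow_natCast (dist x' y) (n - 1), hcast, Real.rpow_neg dist_nonneg]
  have hgm : Measurable fun y : EuclideanSpace ℝ (Fin n) =>
      dist x' y ^ (-((n : ℝ) - 1)) := by
    rw [hgeq]
    exact (((continuous_const.dist continuous_id).pow _).measurable).inv
  have hgnn : ∀ y, 0 ≤ dist x' y ^ (-((n : ℝ) - 1)) := fun y => Real.rpow_nonneg dist_nonneg _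
  -- pass to the lower integral
  rw [MeasureTheory.integral_eq_lintegral_of_nonneg_ae
    (Filter.Eventually.of_forall hgnn) hgm.aestronglyMeasurable]
  -- bound the lintegral
  have hbound : (∫⁻ y in frontier Ω \ Metric.ball x' s,
      ENNReal.ofReal (dist x' y ^ (-((n : ℝ) - 1))) ∂(μH[(n : ℝ) - 1]))
      ≤ (N + 1 : ℕ) * (C * ENNReal.ofReal (2 ^ (n - 1))) := by
    calc (∫⁻ y in frontier Ω \ Metric.ball x' s,
        ENNReal.ofReal (dist x' y ^ (-((n : ℝ) - 1))) ∂(μH[(n : ℝ) - 1]))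
        ≤ ∫⁻ y in ⋃ k : Fin (N + 1), A k,
          ENNReal.ofReal (dist x' y ^ (-((n : ℝ) - 1))) ∂(μH[(n : ℝ) - 1]) :=
          lintegral_mono_set hcover
      _ ≤ ∑' k : Fin (N + 1), ∫⁻ y in A k,
          ENNReal.ofReal (dist x' y ^ (-((n : ℝ) - 1))) ∂(μH[(n : ℝ) - 1]) :=
          lintegral_iUnion_le _ _
      _ ≤ ∑' _k : Fin (N + 1), C * ENNReal.ofReal (2 ^ (n - 1)) := by
          refine ENNReal.tsum_le_tsum fun k => ?_
          have hpk : (0:ℝ) < 2 ^ (k:ℕ) * s := by positivity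
          have hptw : ∀ y ∈ A (k:ℕ),
              ENNReal.ofReal (dist x' y ^ (-((n : ℝ) - 1)))
                ≤ ENNReal.ofReal ((2 ^ (k:ℕ) * s) ^ (-((n : ℝ) - 1))) := by
            intro y hy
            apply ENNReal.ofReal_le_ofReal
            have hyd : 2 ^ (k:ℕ) * s ≤ dist x' y := by
              have := hy.2.2
              rw [Metric.mem_ball, not_lt] at this
              rwa [dist_comm]
            exact Real.rpow_le_rpow_of_nonpos hpk hyd (by linarith)
          calc (∫⁻ y in A (k:ℕ),
              ENNReal.ofReal (dist x' y ^ (-((n : ℝ) - 1))) ∂(μH[(n : ℝ) - 1]))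
              ≤ ∫⁻ _y in A (k:ℕ),
                ENNReal.ofReal ((2 ^ (k:ℕ) * s) ^ (-((n : ℝ) - 1))) ∂(μH[(n : ℝ) - 1]) :=
              setLIntegral_mono' (hAm _) hptw
            _ = ENNReal.ofReal ((2 ^ (k:ℕ) * s) ^ (-((n : ℝ) - 1))) * μH[(n : ℝ) - 1] (A (k:ℕ)) :=
              setLIntegral_const _ _
            _ ≤ ENNReal.ofReal ((2 ^ (k:ℕ) * s) ^ (-((n : ℝ) - 1))) *
                (C * ENNReal.ofReal (2 ^ ((k:ℕ) + 1) * s) ^ (n - 1)) := by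
                gcongr
                refine le_trans (measure_mono ?_) (hC x' hx' (2 ^ ((k:ℕ) + 1) * s) (by positivity))
                exact Set.inter_subset_inter_right _ Set.diff_subset
            _ = C * ENNReal.ofReal (2 ^ (n - 1)) := by
                rw [ENNReal.ofReal_pow (by positivity), ← ENNReal.ofReal_pow (by positivity),
                  ← mul_assoc, mul_comm (ENNReal.ofReal _) C, mul_assoc,
                  ← ENNReal.ofReal_mul (by positivity)]
                congr 2
                have h2a : (2:ℝ) ^ ((k:ℕ) + 1) * s = 2 * (2 ^ (k:ℕ) * s) := by ring
                have hxp : ((2:ℝ) ^ (k:ℕ) * s) ^ (n - 1) = (2 ^ (k:ℕ) * s) ^ ((n:ℝ) - 1) := by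
                  rw [← Real.rpow_natCast _ (n-1), hcast]
                rw [h2a, mul_pow, hxp, mul_comm ((2:ℝ) ^ (n-1)) _, ← mul_assoc,
                  ← Real.rpow_add hpk, neg_add_cancel, Real.rpow_zero, one_mul]
                exact ENNReal.ofReal_pow (by norm_num) _
      _ = (N + 1 : ℕ) * (C * ENNReal.ofReal (2 ^ (n - 1))) := by
          rw [tsum_fintype]
          simp [Finset.card_univ, mul_comm]
  -- conclude
  have hfin : ((N + 1 : ℕ) : ℝ≥0∞) * (C * ENNReal.ofReal (2 ^ (n - 1))) ≠ ∞ :=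
    ENNReal.mul_ne_top (ENNReal.natCast_ne_top _) (ENNReal.mul_ne_top hCne ENNReal.ofReal_ne_top)
  have h1 : (∫⁻ y in frontier Ω \ Metric.ball x' s,
      ENNReal.ofReal (dist x' y ^ (-((n : ℝ) - 1))) ∂(μH[(n : ℝ) - 1])).toReal
      ≤ ((N + 1 : ℕ) : ℝ) * (C.toReal * 2 ^ (n - 1)) := by
    refine le_trans (ENNReal.toReal_mono hfin hbound) ?_
    rw [ENNReal.toReal_mul, ENNReal.toReal_mul, ENNReal.toReal_natCast,
      ENNReal.toReal_ofReal (by positivity)]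
  refine le_trans h1 ?_
  -- now the counting bound
  have hN1 : ((N + 1 : ℕ) : ℝ) ≤ K₀ * |Real.log s| := by
    have hceil : (N : ℝ) < Real.logb 2 (D / s) + 1 := Nat.ceil_lt_add_one hlogbnn
    have hlogb : Real.logb 2 (D / s) = (Real.log D - Real.log s) / Real.log 2 := by
      rw [Real.logb, Real.log_div (by linarith) (ne_of_gt hs0)]
    have habs' : -Real.log s = |Real.log s| := (abs_of_nonpos (by linarith)).symm
    have h2 : Real.logb 2 (D / s) ≤ (Real.log D + |Real.log s|) / Real.log 2 := by
      rw [hlogb]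
      gcongr
      linarith [habs'.ge, habs'.le]
    have h3 : (Real.log D + |Real.log s|) / Real.log 2
        ≤ |Real.log s| * ((Real.log D + 1) / Real.log 2) := by
      rw [div_le_iff₀ hlog2, mul_assoc]
      rw [div_mul_cancel₀ _ (ne_of_gt hlog2)]
      nlinarith [habs, hlogD]
    push_cast
    have : (N:ℝ) + 1 ≤ Real.logb 2 (D / s) + 2 := by linarith
    calc (N:ℝ) + 1 ≤ Real.logb 2 (D / s) + 2 := this
      _ ≤ |Real.log s| * ((Real.log D + 1) / Real.log 2) + 2 := by linarith
      _ ≤ |Real.log s| * ((Real.log D + 1) / Real.log 2) + 2 * |Real.log s| := by nlinarith [habs]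
      _ = K₀ * |Real.log s| := by rw [hK₀]; ring
  calc ((N + 1 : ℕ) : ℝ) * (C.toReal * 2 ^ (n - 1))
      ≤ K₀ * |Real.log s| * (C.toReal * 2 ^ (n - 1)) := by
        apply mul_le_mul_of_nonneg_right hN1
        positivity
    _ ≤ (C.toReal * 2 ^ (n - 1) + 1) * K₀ * |Real.log s| := by
        have h4 : (0:ℝ) ≤ |Real.log s| := abs_nonneg _
        nlinarith [hK₀pos, h4, ENNReal.toReal_nonneg (a := C)]
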